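/- arXiv:2401.13844 — 3 statements merged into one kernel-verified Lean document; each statement's English description precedes it below -/
import Mathlib

section
/- Let X : ℝ → ℝ be a symmetric rearranged profile that is continuous, and assume that the two-dimensional Lebesgue measure of the set {(x,y) ∈ [-1/2,1/2] × [-1/2,1/2] : X(x) = X(y)} is zero. Then for every function u : ℝ → ℝ that is 1-periodic and even, there exists a function ũ : ℝ → ℝ such that u(x) = ũ(X(x)) for every x ∈ ℝ. -/
open MeasureTheory

/-- reduction of a 1-periodic even function to its value at `|x - round x| ∈ [0,1/2]`. -/
lemma reduce_eq {f : ℝ → ℝ} (hf : Function.Periodic f 1) (he : ∀ x : ℝ, f (-x) = f x)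
    (x : ℝ) : f x = f |x - round x| := by
  have h1 : f (x - (round x : ℝ) * 1) = f x := hf.sub_int_mul_eq (round x)
  rcases abs_cases (x - round x) with ⟨h, _⟩ | ⟨h, _⟩
  · rw [h]; rw [← h1]; ring_nf
  · rw [h, he]; rw [← h1]; ring_nf

/-- If a continuous symmetric rearranged profile `X` (1-periodic, even, non-decreasing on
`[0,1/2]`) has a diagonal level set of zero two-dimensional Lebesgue measure in
`[-1/2,1/2]²`, then every 1-periodic even function `u` factorizes through `X`:
there is `ũ` with `u = ũ ∘ X`. -/
theorem stmt_1 (X : ℝ → ℝ)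
    (hper : Function.Periodic X 1)
    (heven : ∀ x : ℝ, X (-x) = X x)
    (hmono : MonotoneOn X (Set.Icc (0 : ℝ) (1/2)))
    (hcont : Continuous X)
    (hnull : (volume : Measure (ℝ × ℝ))
      {p : ℝ × ℝ | p.1 ∈ Set.Icc (-(1/2) : ℝ) (1/2) ∧ p.2 ∈ Set.Icc (-(1/2) : ℝ) (1/2) ∧
        X p.1 = X p.2} = 0) :
    ∀ u : ℝ → ℝ, Function.Periodic u 1 → (∀ x : ℝ, u (-x) = u x) →
      ∃ utilde : ℝ → ℝ, ∀ x : ℝ, u x = utilde (X x) := by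
  intro u huper hueven
  -- X is strictly monotone on [0,1/2]
  have hsm : StrictMonoOn X (Set.Icc (0 : ℝ) (1/2)) := by
    intro a ha b hb hab
    rcases lt_or_eq_of_le (hmono ha hb hab.le) with h | h
    · exact h
    exfalso
    have hsq : Set.Icc a b ×ˢ Set.Icc a b ⊆
        {p : ℝ × ℝ | p.1 ∈ Set.Icc (-(1/2) : ℝ) (1/2) ∧ p.2 ∈ Set.Icc (-(1/2) : ℝ) (1/2) ∧
          X p.1 = X p.2} := by
      rintro ⟨x, y⟩ ⟨hx, hy⟩
      have hxI : x ∈ Set.Icc (0:ℝ) (1/2) := ⟨ha.1.trans hx.1, hx.2.trans hb.2⟩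
      have hyI : y ∈ Set.Icc (0:ℝ) (1/2) := ⟨ha.1.trans hy.1, hy.2.trans hb.2⟩
      have hXx : X x = X a :=
        le_antisymm (h ▸ hmono hxI hb hx.2) (hmono ha hxI hx.1)
      have hXy : X y = X a :=
        le_antisymm (h ▸ hmono hyI hb hy.2) (hmono ha hyI hy.1)
      refine ⟨⟨by linarith [hxI.1], hxI.2⟩, ⟨by linarith [hyI.1], hyI.2⟩, by rw [hXx, hXy]⟩
    have hle := measure_mono (μ := (volume : Measure (ℝ × ℝ))) hsq
    rw [hnull] at hle
    have hpos : (0 : ENNReal) < volume (Set.Icc a b ×ˢ Set.Icc a b) := by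
      rw [show (volume : Measure (ℝ × ℝ)) = (volume : Measure ℝ).prod volume from rfl,
        Measure.prod_prod, Real.volume_Icc]
      have : (0:ENNReal) < ENNReal.ofReal (b - a) := by
        rw [ENNReal.ofReal_pos]; linarith
      exact ENNReal.mul_pos this.ne' this.ne'
    exact absurd hle (by simpa using hpos.not_ge)
  -- u is constant on fibers of X
  have hfib : ∀ x y : ℝ, X x = X y → u x = u y := by
    intro x y hxy
    set tx := |x - round x| with htx
    set ty := |y - round y| with hty
    have hxm : tx ∈ Set.Icc (0:ℝ) (1/2) := ⟨abs_nonneg _, abs_sub_round x⟩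
    have hym : ty ∈ Set.Icc (0:ℝ) (1/2) := ⟨abs_nonneg _, abs_sub_round y⟩
    have hX : X tx = X ty := by
      rw [← reduce_eq hper heven x, ← reduce_eq hper heven y, hxy]
    have : tx = ty := hsm.injOn hxm hym hX
    rw [reduce_eq huper hueven x, reduce_eq huper hueven y, ← htx, ← hty, this]
  classical
  refine ⟨fun v => if h : ∃ x, X x = v then u h.choose else 0, fun x => ?_⟩
  have h : ∃ y, X y = X x := ⟨x, rfl⟩
  simp only [dif_pos h]
  exact hfib x h.choose h.choose_spec.symm
end

section
/- For every λ ∈ (1/2, 1) there exist δ ∈ (0,1) and a constant C ≥ 0 with the following property: for every M ≥ 0, every sequence (a_k)_{k≥1} of real numbers, and every sequence (b_k)_{k≥1} of nonnegative reals such that |a_k| ≤ M and k·|a_k| ≤ b_k for all k ≥ 1, one has Σ_{k≥1} k^{2λ} a_k² ≤ C · M^{1-δ} · (Σ_{k≥1} b_k²)^{(1+δ)/2}, where the sums are taken in [0,∞]. -/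
open scoped ENNReal NNReal

/-- Hölder for ENNReal tsums. -/
lemma enn_holder_tsum {ι : Type*} (f g : ι → ℝ≥0∞) {p q : ℝ}
    (hpq : p.HolderConjugate q) :
    ∑' i, f i * g i ≤ (∑' i, f i ^ p) ^ (1/p) * (∑' i, g i ^ q) ^ (1/q) := by
  rw [ENNReal.tsum_eq_iSup_sum]
  refine iSup_le fun t => ?_
  refine (ENNReal.inner_le_Lp_mul_Lq t f g hpq).trans ?_
  gcongr
  · exact hpq.one_div_nonneg
  · exact ENNReal.sum_le_tsum t
  · exact hpq.symm.one_div_nonneg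
  · exact ENNReal.sum_le_tsum t

/-- For every `λ ∈ (1/2,1)` there exist `δ ∈ (0,1)` and `C ≥ 0` such that for every `M ≥ 0`
and all sequences `(a_k)_{k ≥ 1}`, `(b_k)_{k ≥ 1}` with `b_k ≥ 0`, `|a_k| ≤ M` and
`k·|a_k| ≤ b_k`, one has `Σ_{k ≥ 1} k^(2λ) a_k² ≤ C · M^(1-δ) · (Σ_{k ≥ 1} b_k²)^((1+δ)/2)`,
the sums being taken in `[0,∞]`. -/
theorem stmt_5 (l : ℝ) (hl₁ : 1/2 < l) (hl₂ : l < 1) :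
    ∃ δ : ℝ, 0 < δ ∧ δ < 1 ∧ ∃ C : ℝ, 0 ≤ C ∧
      ∀ M : ℝ, 0 ≤ M → ∀ a b : ℕ+ → ℝ,
        (∀ k : ℕ+, 0 ≤ b k) →
        (∀ k : ℕ+, |a k| ≤ M) →
        (∀ k : ℕ+, (k : ℝ) * |a k| ≤ b k) →
        (∑' k : ℕ+, ENNReal.ofReal ((k : ℝ) ^ (2 * l) * (a k) ^ 2))
          ≤ ENNReal.ofReal C * ENNReal.ofReal (M ^ (1 - δ)) *
            (∑' k : ℕ+, ENNReal.ofReal ((b k) ^ 2)) ^ ((1 + δ) / 2) := by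
  set δ : ℝ := (2 * l + 1) / 3 with hδdef
  have hδ0 : 0 < δ := by rw [hδdef]; linarith
  have hδ1 : δ < 1 := by rw [hδdef]; linarith
  set s : ℝ := 2 * (2 * l - 1 - δ) / (1 - δ) with hsdef
  have h1δ : (0:ℝ) < 1 - δ := by linarith
  have h1δ' : (0:ℝ) < 1 + δ := by linarith
  have hs : s < -1 := by
    rw [hsdef, div_lt_iff₀ h1δ, hδdef]
    nlinarith [sq_nonneg (l - 1)]
  have hsum : Summable (fun k : ℕ+ => (k : ℝ) ^ s) := by
    have h : Summable (fun n : ℕ => (n : ℝ) ^ s) := Real.summable_nat_rpow.mpr hs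
    exact h.comp_injective PNat.coe_injective
  set T : ℝ := ∑' k : ℕ+, (k : ℝ) ^ s with hTdef
  have hT0 : 0 ≤ T := tsum_nonneg fun k => Real.rpow_nonneg (by positivity) _
  refine ⟨δ, hδ0, hδ1, T ^ ((1 - δ)/2), Real.rpow_nonneg hT0 _, ?_⟩
  intro M hM a b hb ha hab
  set p : ℝ := 2 / (1 - δ) with hpdef
  set q : ℝ := 2 / (1 + δ) with hqdef
  have hpq : p.HolderConjugate q := by
    rw [Real.holderConjugate_iff]
    constructor
    · rw [hpdef, lt_div_iff₀ h1δ]; linarith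
    · rw [hpdef, hqdef, inv_div, inv_div]; ring
  -- pointwise bound
  have key : ∀ k : ℕ+, (k : ℝ) ^ (2 * l) * (a k) ^ 2 ≤
      M ^ (1 - δ) * ((k : ℝ) ^ (2 * l - 1 - δ) * (b k) ^ (1 + δ)) := by
    intro k
    have hK1 : (1:ℝ) ≤ (k : ℝ) := by exact_mod_cast k.one_le
    have hK0 : (0:ℝ) < (k : ℝ) := lt_of_lt_of_le one_pos hK1
    have hA0 : 0 ≤ |a k| := abs_nonneg _
    rcases eq_or_lt_of_le hA0 with hA | hA
    · have hz : a k = 0 := abs_eq_zero.mp hA.symm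
      rw [hz]
      have hpos : (0:ℝ) ≤ M ^ (1 - δ) * ((k : ℝ) ^ (2 * l - 1 - δ) * (b k) ^ (1 + δ)) := by
        have := hb k
        positivity
      simpa using hpos
    · have h1 : (a k) ^ 2 = |a k| ^ (1 - δ) * |a k| ^ (1 + δ) := by
        rw [← Real.rpow_add hA, show (1:ℝ) - δ + (1 + δ) = 2 by ring, ← sq_abs,
          Real.rpow_two]
      have h2 : |a k| ^ (1 - δ) ≤ M ^ (1 - δ) :=
        Real.rpow_le_rpow hA0 (ha k) (by linarith)
      have h3 : |a k| ≤ b k / (k : ℝ) := by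
        rw [le_div_iff₀ hK0]; linarith [hab k]
      have h4 : |a k| ^ (1 + δ) ≤ (b k / (k : ℝ)) ^ (1 + δ) :=
        Real.rpow_le_rpow hA0 h3 (by linarith)
      calc (k : ℝ) ^ (2 * l) * (a k) ^ 2
          = (k : ℝ) ^ (2 * l) * (|a k| ^ (1 - δ) * |a k| ^ (1 + δ)) := by rw [h1]
        _ ≤ (k : ℝ) ^ (2 * l) * (M ^ (1 - δ) * (b k / (k : ℝ)) ^ (1 + δ)) := by
            have hk2l : (0:ℝ) ≤ (k : ℝ) ^ (2 * l) := Real.rpow_nonneg hK0.le _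
            exact mul_le_mul_of_nonneg_left
              (mul_le_mul h2 h4 (Real.rpow_nonneg hA0 _) (Real.rpow_nonneg hM _)) hk2l
        _ = M ^ (1 - δ) * ((k : ℝ) ^ (2 * l - 1 - δ) * (b k) ^ (1 + δ)) := by
            rw [Real.div_rpow (hb k) hK0.le,
              show (2:ℝ) * l - 1 - δ = 2 * l - (1 + δ) by ring, Real.rpow_sub hK0]
            field_simp
  -- identities for the Hölder factors
  have hps : (2 * l - 1 - δ) * p = s := by
    rw [hpdef, hsdef]; field_simp
  have hq2 : (1 + δ) * q = ((2:ℕ):ℝ) := by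
    rw [hqdef]; push_cast; field_simp
  have hfp : ∀ k : ℕ+, (ENNReal.ofReal ((k : ℝ) ^ (2 * l - 1 - δ))) ^ p
      = ENNReal.ofReal ((k : ℝ) ^ s) := by
    intro k
    have hK0 : (0:ℝ) < (k : ℝ) := by exact_mod_cast k.pos
    rw [ENNReal.ofReal_rpow_of_nonneg (Real.rpow_nonneg hK0.le _) hpq.nonneg,
      ← Real.rpow_mul hK0.le, hps]
  have hgq : ∀ k : ℕ+, (ENNReal.ofReal ((b k) ^ (1 + δ))) ^ q
      = ENNReal.ofReal ((b k) ^ 2) := by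
    intro k
    rw [ENNReal.ofReal_rpow_of_nonneg (Real.rpow_nonneg (hb k) _) hpq.symm.nonneg,
      ← Real.rpow_mul (hb k), hq2, Real.rpow_natCast]
  have hTsum : (∑' k : ℕ+, ENNReal.ofReal ((k : ℝ) ^ s)) = ENNReal.ofReal T := by
    rw [hTdef]
    exact (ENNReal.ofReal_tsum_of_nonneg
      (fun k => Real.rpow_nonneg (by positivity) _) hsum).symm
  have hinvp : 1 / p = (1 - δ) / 2 := by rw [hpdef]; field_simp
  have hinvq : 1 / q = (1 + δ) / 2 := by rw [hqdef]; field_simp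
  -- main chain
  calc (∑' k : ℕ+, ENNReal.ofReal ((k : ℝ) ^ (2 * l) * (a k) ^ 2))
      ≤ ∑' k : ℕ+, ENNReal.ofReal
          (M ^ (1 - δ) * ((k : ℝ) ^ (2 * l - 1 - δ) * (b k) ^ (1 + δ))) :=
        ENNReal.tsum_le_tsum fun k => ENNReal.ofReal_le_ofReal (key k)
    _ = ENNReal.ofReal (M ^ (1 - δ)) *
        ∑' k : ℕ+, ENNReal.ofReal ((k : ℝ) ^ (2 * l - 1 - δ)) *
          ENNReal.ofReal ((b k) ^ (1 + δ)) := by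
        rw [← ENNReal.tsum_mul_left]
        congr 1
        funext k
        have hK0 : (0:ℝ) < (k : ℝ) := by exact_mod_cast k.pos
        rw [ENNReal.ofReal_mul (Real.rpow_nonneg hM _),
          ENNReal.ofReal_mul (Real.rpow_nonneg hK0.le _)]
    _ ≤ ENNReal.ofReal (M ^ (1 - δ)) *
        ((∑' k : ℕ+, (ENNReal.ofReal ((k : ℝ) ^ (2 * l - 1 - δ))) ^ p) ^ (1/p) *
         (∑' k : ℕ+, (ENNReal.ofReal ((b k) ^ (1 + δ))) ^ q) ^ (1/q)) :=
        mul_le_mul_of_nonneg_left (enn_holder_tsum _ _ hpq) (zero_le)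
    _ = ENNReal.ofReal (T ^ ((1 - δ)/2)) * ENNReal.ofReal (M ^ (1 - δ)) *
        (∑' k : ℕ+, ENNReal.ofReal ((b k) ^ 2)) ^ ((1 + δ) / 2) := by
        simp only [hfp, hgq, hTsum, hinvp, hinvq]
        rw [ENNReal.ofReal_rpow_of_nonneg hT0 (by linarith : (0:ℝ) ≤ (1 - δ)/2)]
        ring
end

section
/- Let a < b be real numbers, K ≥ 0, and let f : [a,b] → ℝ be continuous and nonnegative, satisfying f(s)² ≤ K · ∫_a^s f(r) dr for every s ∈ [a,b]. Then f(s) ≤ (K/2)·(s - a) for every s ∈ [a,b]. -/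
open MeasureTheory intervalIntegral Set

/-- Nonlinear Gronwall-type inequality: if `f` is continuous and nonnegative on `[a,b]` and
`f(s)² ≤ K · ∫_a^s f(r) dr` for every `s ∈ [a,b]`, then `f(s) ≤ (K/2)(s-a)` on `[a,b]`. -/
theorem stmt_9 (a b K : ℝ) (hab : a < b) (hK : 0 ≤ K) (f : ℝ → ℝ)
    (hcont : ContinuousOn f (Set.Icc a b))
    (hpos : ∀ s ∈ Set.Icc a b, 0 ≤ f s)
    (hineq : ∀ s ∈ Set.Icc a b, (f s) ^ 2 ≤ K * ∫ r in a..s, f r) :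
    ∀ s ∈ Set.Icc a b, f s ≤ (K / 2) * (s - a) := by
  set F : ℝ → ℝ := fun s => ∫ r in a..s, f r with hF
  have hfint : IntegrableOn f (Set.Icc a b) volume :=
    hcont.integrableOn_Icc
  have hFcont : ContinuousOn F (Set.Icc a b) := by
    have := continuousOn_primitive_interval (a := a) (b := b) (μ := volume)
      (f := f) (by rwa [Set.uIcc_of_le hab.le])
    rwa [Set.uIcc_of_le hab.le] at this
  have hFnonneg : ∀ s ∈ Set.Icc a b, 0 ≤ F s := fun s hs =>
    intervalIntegral.integral_nonneg hs.1 (fun u hu => hpos u ⟨hu.1, hu.2.trans hs.2⟩)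
  -- key estimate: F s ≤ K/4 (s-a)^2 + error
  have key : ∀ ε > 0, ∀ s ∈ Set.Icc a b,
      Real.sqrt (F s + ε) ≤ Real.sqrt ε + (Real.sqrt K / 2) * (s - a) := by
    intro ε hε s hs
    set g : ℝ → ℝ := fun t => Real.sqrt (F t + ε) with hg
    have hderiv : ∀ x ∈ Set.Ioo a b,
        HasDerivAt g (f x / (2 * Real.sqrt (F x + ε))) x := by
      intro x hx
      have hxI : x ∈ Set.Icc a b := Set.Ioo_subset_Icc_self hx
      have hFd : HasDerivAt F (f x) x := by
        apply intervalIntegral.integral_hasDerivAt_right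
        · apply IntegrableOn.intervalIntegrable
          rw [Set.uIcc_of_le hx.1.le]
          exact hfint.mono_set (Set.Icc_subset_Icc le_rfl hxI.2)
        · exact ⟨Set.Icc a b, Icc_mem_nhds hx.1 hx.2,
            hcont.aestronglyMeasurable measurableSet_Icc⟩
        · exact hcont.continuousAt (Icc_mem_nhds hx.1 hx.2)
      have hFx : 0 ≤ F x := hFnonneg x hxI
      have hne : F x + ε ≠ 0 := by positivity
      have := (hFd.add_const ε).sqrt hne
      simpa using this
    have hgc : ContinuousOn g (Set.Icc a b) :=
      (hFcont.add continuousOn_const).sqrt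
    -- h = linear bound minus g is monotone
    have hmono : MonotoneOn
        (fun t => Real.sqrt ε + (Real.sqrt K / 2) * (t - a) - g t) (Set.Icc a b) := by
      apply monotoneOn_of_deriv_nonneg (convex_Icc a b)
      · exact (Continuous.continuousOn (by continuity)).sub hgc
      · intro x hx
        rw [interior_Icc] at hx
        exact ((((hasDerivAt_id x).sub_const a).const_mul (Real.sqrt K / 2)).const_add
          (Real.sqrt ε)).differentiableAt.sub (hderiv x hx).differentiableAt
          |>.differentiableWithinAt
      · intro x hx
        rw [interior_Icc] at hx
        have hxI : x ∈ Set.Icc a b := Set.Ioo_subset_Icc_self hx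
        have hd : HasDerivAt (fun t => Real.sqrt ε + (Real.sqrt K / 2) * (t - a) - g t)
            (Real.sqrt K / 2 - f x / (2 * Real.sqrt (F x + ε))) x := by
          exact ((((hasDerivAt_id x).sub_const a).const_mul (Real.sqrt K / 2)).const_add
            (Real.sqrt ε)).sub (hderiv x hx) |>.congr_deriv (by ring)
        rw [hd.deriv]
        have hs0 : 0 < Real.sqrt (F x + ε) := Real.sqrt_pos.mpr (by
          have := hFnonneg x hxI; linarith)
        have hfb : f x ≤ Real.sqrt K * Real.sqrt (F x + ε) := by
          rw [← Real.sqrt_mul hK]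
          have h1 : (f x) ^ 2 ≤ K * (F x + ε) := by
            have := hineq x hxI
            nlinarith
          calc f x = Real.sqrt ((f x) ^ 2) := by
                rw [Real.sqrt_sq (hpos x hxI)]
            _ ≤ Real.sqrt (K * (F x + ε)) := Real.sqrt_le_sqrt h1
          
        rw [sub_nonneg, div_le_div_iff₀ (by positivity) (by norm_num)]
        nlinarith
    have := hmono (Set.left_mem_Icc.mpr hab.le) hs hs.1
    have hFa : F a = 0 := by simp [hF]
    simp only [hg, hFa, zero_add, sub_self, mul_zero] at this
    linarith [this]
  intro s hs
  -- limit ε → 0 : F s ≤ K/4 (s-a)^2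
  have hFle : F s ≤ K / 4 * (s - a) ^ 2 := by
    refine le_of_forall_pos_le_add fun δ hδ => ?_
    obtain ⟨ε, hε0, hεsmall⟩ : ∃ ε > 0,
        ε + 2 * Real.sqrt ε * (Real.sqrt K / 2 * (s - a)) ≤ δ := by
      have hsa : (0:ℝ) ≤ s - a := by have := hs.1; linarith
      have hc : 0 ≤ Real.sqrt K / 2 * (s - a) := by positivity
      set C := Real.sqrt K / 2 * (s - a) with hC
      refine ⟨min 1 ((δ / (1 + 2 * C)) ^ 2), ?_, ?_⟩
      · have : 0 < δ / (1 + 2 * C) := by positivity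
        positivity
      · set ε := min 1 ((δ / (1 + 2 * C)) ^ 2) with hε
        have hε1 : ε ≤ 1 := min_le_left _ _
        have hε2 : ε ≤ (δ / (1 + 2 * C)) ^ 2 := min_le_right _ _
        have hε0' : 0 ≤ ε := by
          have : 0 < δ / (1 + 2 * C) := by positivity
          positivity
        have hsq : Real.sqrt ε ≤ δ / (1 + 2 * C) := by
          calc Real.sqrt ε ≤ Real.sqrt ((δ / (1 + 2 * C)) ^ 2) := Real.sqrt_le_sqrt hε2
            _ = δ / (1 + 2 * C) := Real.sqrt_sq (by positivity)
        have hεle : ε ≤ Real.sqrt ε := by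
          nlinarith [Real.sq_sqrt hε0', Real.sqrt_nonneg ε, Real.sqrt_le_sqrt hε1,
            Real.sqrt_one]
        have h1C : 0 < 1 + 2 * C := by linarith
        calc ε + 2 * Real.sqrt ε * C ≤ Real.sqrt ε * (1 + 2 * C) := by nlinarith
          _ ≤ δ / (1 + 2 * C) * (1 + 2 * C) := by nlinarith [Real.sqrt_nonneg ε]
          _ = δ := by field_simp
    have h1 := key ε hε0 s hs
    have h2 : F s + ε ≤ (Real.sqrt ε + Real.sqrt K / 2 * (s - a)) ^ 2 := by
      have hFε : (0:ℝ) ≤ F s + ε := by have := hFnonneg s hs; linarith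
      calc F s + ε = Real.sqrt (F s + ε) ^ 2 := (Real.sq_sqrt hFε).symm
        _ ≤ (Real.sqrt ε + Real.sqrt K / 2 * (s - a)) ^ 2 :=
          pow_le_pow_left₀ (Real.sqrt_nonneg _) h1 2
    have hKsq : Real.sqrt K ^ 2 = K := Real.sq_sqrt hK
    have hεsq : Real.sqrt ε ^ 2 = ε := Real.sq_sqrt hε0.le
    nlinarith [hεsmall, h2]
  have hineqs := hineq s hs
  have hf2 : (f s) ^ 2 ≤ (K / 2 * (s - a)) ^ 2 := by nlinarith
  have : f s = Real.sqrt ((f s) ^ 2) := (Real.sqrt_sq (hpos s hs)).symm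
  rw [this]
  calc Real.sqrt ((f s) ^ 2) ≤ Real.sqrt ((K / 2 * (s - a)) ^ 2) := Real.sqrt_le_sqrt hf2
    _ = K / 2 * (s - a) := Real.sqrt_sq (by have := hs.1; nlinarith)
end
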